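/- Let W be a vector space over ℂ and f : ℂ × ℂ → W any family (an element of W{x, log x}). Then for all K ∈ ℕ and N, M ∈ ℂ: (1/K!)·(D^K f)(N, M) = Σ_{j=0}^{K} Σ_{q=j}^{K} C(N+K, K−q)·C(M+j, j)·c_{j,q}·f(N+K, M+j), where c_{j,q} := (−1)^{q−j}·Σ 1/(i₁ i₂ ⋯ i_j), the sum ranging over all ordered j-tuples (i₁,…,i_j) of positive integers with i₁+⋯+i_j = q (so c_{0,0} = 1 and c_{0,q} = 0 for q > 0). This is the assertion e^{y·d/dx} f = f(x+y): the left-hand side is the coefficient of y^K x^N (log x)^M in the Taylor series Σ_K (1/K!)(D^K f) y^K, and the right-hand side is the coefficient of y^K x^N (log x)^M in Σ_{n,m} f(n,m)·(x+y)^n·(log x + Σ_{i≥1} (−1)^{i−1}(y/x)^i/i)^m, expanded by the binomial expansion convention in nonnegative integral powers of y and of Σ_{i≥1} (−1)^{i−1}(y/x)^i/i respectively. -/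

import Mathlib

/-- The formal derivative `d/dx` acting on logarithmic formal series `W{x, log x}`,
represented as coefficient families `f : ℂ × ℂ → W`, where `f (n, m)` is the coefficient
of `x^n (log x)^m`. -/
noncomputable def Dlog {W : Type*} [AddCommGroup W] [Module ℂ W]
    (f : ℂ × ℂ → W) : ℂ × ℂ → W :=
  fun p => (p.1 + 1) • f (p.1 + 1, p.2) + (p.2 + 1) • f (p.1 + 1, p.2 + 1)

/-- The generalized binomial coefficient `C(α, l) = α(α−1)⋯(α−l+1)/l!`. -/
noncomputable def cbinom (α : ℂ) (l : ℕ) : ℂ :=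
  (∏ i ∈ Finset.range l, (α - (i : ℂ))) / (l.factorial : ℂ)

/-- `c_{j,q} = (−1)^{q−j} Σ_{i₁+⋯+i_j = q, i₁,…,i_j ≥ 1} 1/(i₁ i₂ ⋯ i_j)`. -/
noncomputable def logCoeff (j q : ℕ) : ℂ :=
  (-1 : ℂ) ^ (q - j) *
    ∑ g ∈ (Finset.Nat.antidiagonalTuple j q).filter (fun g => ∀ i, 0 < g i),
      (∏ i, (g i : ℂ))⁻¹

open Finset

/-- unfiltered composition sum -/
noncomputable def sAux (j q : ℕ) : ℂ :=
  ∑ g ∈ Finset.Nat.antidiagonalTuple j q, (∏ i, (g i : ℂ))⁻¹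

lemma sum_adt_succ {β : Type*} [AddCommMonoid β] (j n : ℕ) (F : (Fin (j+1) → ℕ) → β) :
    ∑ g ∈ Finset.Nat.antidiagonalTuple (j+1) n, F g
      = ∑ p ∈ Finset.HasAntidiagonal.antidiagonal n, ∑ g ∈ Finset.Nat.antidiagonalTuple j p.2,
          F (Fin.cons p.1 g) := by
  rw [Finset.sum_sigma']
  refine Finset.sum_nbij' (fun g => ⟨(g 0, ∑ i, Fin.tail g i), Fin.tail g⟩)
    (fun x => Fin.cons x.1.1 x.2) ?_ ?_ ?_ ?_ ?_
  · intro g hg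
    rw [Finset.Nat.mem_antidiagonalTuple] at hg
    simp only [Finset.mem_sigma, Finset.HasAntidiagonal.mem_antidiagonal, Finset.Nat.mem_antidiagonalTuple]
    refine ⟨?_, trivial⟩
    rw [← hg, Fin.sum_univ_succ]
    rfl
  · intro x hx
    simp only [Finset.mem_sigma, Finset.HasAntidiagonal.mem_antidiagonal,
      Finset.Nat.mem_antidiagonalTuple] at hx ⊢
    rw [Fin.sum_cons, hx.2, hx.1]
  · intro g hg; simp [Fin.cons_self_tail]
  · intro x hx
    simp only [Finset.mem_sigma, Finset.HasAntidiagonal.mem_antidiagonal,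
      Finset.Nat.mem_antidiagonalTuple] at hx
    ext : 1
    · simp only [Fin.cons_zero, Fin.tail_cons]
      exact Prod.ext rfl hx.2
    · simp [Fin.tail_cons]
  · intro g hg; simp [Fin.cons_self_tail]

lemma sAux_conv (j q : ℕ) :
    sAux (j+1) q = ∑ i ∈ range (q+1), ((i:ℂ))⁻¹ * sAux j (q - i) := by
  rw [sAux, sum_adt_succ, Finset.Nat.sum_antidiagonal_eq_sum_range_succ_mk]
  refine Finset.sum_congr rfl fun i _ => ?_
  rw [sAux, Finset.mul_sum]
  refine Finset.sum_congr rfl fun g _ => ?_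
  rw [Fin.prod_univ_succ]
  simp [mul_inv]
  ring

@[simp] lemma sAux_zero_zero : sAux 0 0 = 1 := by
  simp [sAux, Finset.Nat.antidiagonalTuple_zero_zero]

@[simp] lemma sAux_zero_succ (q : ℕ) : sAux 0 (q+1) = 0 := by
  simp [sAux, Finset.Nat.antidiagonalTuple_zero_succ]

@[simp] lemma sAux_one (q : ℕ) : sAux 1 q = (q : ℂ)⁻¹ := by
  simp [sAux, Finset.Nat.antidiagonalTuple_one]

@[simp] lemma sAux_succ_zero (j : ℕ) : sAux (j+1) 0 = 0 := by
  simp [sAux, Finset.Nat.antidiagonalTuple_zero_right]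

lemma sAux_eq_zero {j q : ℕ} (h : q < j) : sAux j q = 0 := by
  rw [sAux]
  refine Finset.sum_eq_zero fun g hg => ?_
  rw [Finset.Nat.mem_antidiagonalTuple] at hg
  have : ∃ i, g i = 0 := by
    by_contra hc
    push_neg at hc
    have : ∀ i, 1 ≤ g i := fun i => Nat.one_le_iff_ne_zero.2 (hc i)
    have hle : (j : ℕ) ≤ ∑ i, g i := by
      calc (j:ℕ) = ∑ _i : Fin j, 1 := by simp
      _ ≤ ∑ i, g i := Finset.sum_le_sum fun i _ => this i
    omega
  obtain ⟨i, hi⟩ := this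
  rw [Finset.prod_eq_zero (Finset.mem_univ i) (by simp [hi]), inv_zero]

lemma sRec (j : ℕ) : ∀ r : ℕ, ((r:ℂ)+1) * sAux (j+1) (r+1)
    = (r:ℂ) * sAux (j+1) r + ((j:ℂ)+1) * sAux j r := by
  induction j with
  | zero =>
    intro r
    rcases r with _ | r
    · simp
    · rw [sAux_one, sAux_one, sAux_zero_succ]
      push_cast
      have h1 : ((r:ℂ)+1) ≠ 0 := by exact_mod_cast Nat.succ_ne_zero r
      have h2 : ((r:ℂ)+1+1) ≠ 0 := by exact_mod_cast Nat.succ_ne_zero (r+1)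
      rw [mul_inv_cancel₀ h1, mul_inv_cancel₀ h2]
      ring
  | succ j ih =>
    intro r
    -- expand both s (j+2) values by convolution
    rw [sAux_conv (j+1) (r+1), sAux_conv (j+1) r, Finset.mul_sum, Finset.mul_sum]
    -- LHS: note (r+1 : ℂ) = i + (r+1-i) for i ≤ r+1
    have hL : ∀ i ∈ range (r+2), ((r:ℂ)+1) * ((i:ℂ)⁻¹ * sAux (j+1) (r+1-i))
        = (i:ℂ) * (i:ℂ)⁻¹ * sAux (j+1) (r+1-i)
          + (i:ℂ)⁻¹ * (((r+1-i : ℕ):ℂ) * sAux (j+1) (r+1-i)) := by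
      intro i hi
      rw [Finset.mem_range] at hi
      have : ((r+1-i : ℕ):ℂ) = (r:ℂ) + 1 - (i:ℂ) := by
        rw [Nat.cast_sub (by omega)]; push_cast; ring
      rw [this]; ring
    rw [Finset.sum_congr rfl hL, Finset.sum_add_distrib]
    have hR : ∀ i ∈ range (r+1), (r:ℂ) * ((i:ℂ)⁻¹ * sAux (j+1) (r-i))
        = (i:ℂ) * (i:ℂ)⁻¹ * sAux (j+1) (r-i)
          + (i:ℂ)⁻¹ * (((r-i : ℕ):ℂ) * sAux (j+1) (r-i)) := by
      intro i hi
      rw [Finset.mem_range] at hi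
      have : ((r-i : ℕ):ℂ) = (r:ℂ) - (i:ℂ) := by
        rw [Nat.cast_sub (by omega)]
      rw [this]; ring
    rw [Finset.sum_congr rfl hR, Finset.sum_add_distrib]
    -- first pieces: ∑_{i∈range(n+1)} (i * i⁻¹) * s (r+?-i) = ∑_{m∈range ?} s m
    have hfirst : ∀ n : ℕ, ∑ i ∈ range (n+1), (i:ℂ) * (i:ℂ)⁻¹ * sAux (j+1) (n-i)
        = ∑ m ∈ range n, sAux (j+1) m := by
      intro n
      rw [Finset.sum_range_succ']
      simp only [Nat.cast_zero, zero_mul, inv_zero, mul_zero, zero_mul, add_zero]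
      have : ∀ i ∈ range n, ((i:ℂ)+1) * ((i:ℂ)+1)⁻¹ * sAux (j+1) (n-(i+1))
          = sAux (j+1) (n-(i+1)) := by
        intro i hi
        rw [mul_inv_cancel₀ (show ((i:ℂ)+1) ≠ 0 by exact_mod_cast Nat.succ_ne_zero i), one_mul]
      rw [Finset.sum_congr rfl (by
        intro i hi
        push_cast
        exact this i hi)]
      rw [← Finset.sum_range_reflect]
      refine Finset.sum_congr rfl fun m hm => ?_
      rw [Finset.mem_range] at hm
      congr 1
      omega
    rw [hfirst (r+1), hfirst r]
    -- second piece of LHS: drop i = r+1 term (it is zero), then apply ih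
    have hsecond : ∑ i ∈ range (r+2), (i:ℂ)⁻¹ * (((r+1-i : ℕ):ℂ) * sAux (j+1) (r+1-i))
        = ∑ i ∈ range (r+1), (i:ℂ)⁻¹ * (((r-i : ℕ):ℂ) * sAux (j+1) (r-i))
          + ((j:ℂ)+1) * ∑ i ∈ range (r+1), (i:ℂ)⁻¹ * sAux j (r-i) := by
      rw [Finset.sum_range_succ]
      have : (r+1-(r+1) : ℕ) = 0 := by omega
      rw [this]
      simp only [Nat.cast_zero, zero_mul, mul_zero, add_zero]
      rw [Finset.mul_sum, ← Finset.sum_add_distrib]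
      refine Finset.sum_congr rfl fun i hi => ?_
      rw [Finset.mem_range] at hi
      have h1 : (r+1-i : ℕ) = (r-i) + 1 := by omega
      rw [h1]
      push_cast
      rw [ih (r-i)]
      ring
    rw [hsecond, ← sAux_conv j r, Finset.sum_range_succ]
    have hassoc : ∑ i ∈ range (r+1), (i:ℂ)⁻¹ * (((r-i:ℕ):ℂ) * sAux (j+1) (r-i))
        = ∑ i ∈ range (r+1), (i:ℂ)⁻¹ * ((r-i:ℕ):ℂ) * sAux (j+1) (r-i) :=
      Finset.sum_congr rfl fun i _ => (mul_assoc _ _ _).symm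
    rw [hassoc]
    push_cast
    ring

lemma logCoeff_eq (j q : ℕ) : logCoeff j q = (-1:ℂ)^(q-j) * sAux j q := by
  rw [logCoeff, sAux]
  congr 1
  refine Finset.sum_filter_of_ne fun g hg hne => ?_
  intro i
  rcases Nat.eq_zero_or_pos (g i) with h0 | h; swap
  · exact h
  exact absurd (by rw [Finset.prod_eq_zero (Finset.mem_univ i) (by simp [h0]), inv_zero]) hne

lemma logCoeff_zero_lt {j q : ℕ} (h : q < j) : logCoeff j q = 0 := by
  rw [logCoeff_eq, sAux_eq_zero h, mul_zero]

lemma logCoeff_zero_succ (q : ℕ) : logCoeff 0 (q+1) = 0 := by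
  rw [logCoeff_eq, sAux_zero_succ, mul_zero]

@[simp] lemma logCoeff_zero_zero : logCoeff 0 0 = 1 := by
  rw [logCoeff_eq]
  norm_num

/-- the key recurrence for logCoeff -/
lemma cRec (j r : ℕ) : (r:ℂ) * logCoeff (j+1) r + ((r:ℂ)+1) * logCoeff (j+1) (r+1)
    = ((j:ℂ)+1) * logCoeff j r := by
  rcases lt_trichotomy r j with h | h | h
  · rw [logCoeff_zero_lt (by omega), logCoeff_zero_lt (by omega), logCoeff_zero_lt h]
    ring
  · subst h
    rw [logCoeff_zero_lt (by omega)]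
    rw [logCoeff_eq, logCoeff_eq]
    simp only [Nat.sub_self, pow_zero, one_mul]
    have := sRec r r
    rw [sAux_eq_zero (by omega : r < r + 1)] at this
    linear_combination this
  · -- r > j, write r = j + 1 + t
    obtain ⟨t, rfl⟩ : ∃ t, r = j + 1 + t := ⟨r - (j+1), by omega⟩
    rw [logCoeff_eq, logCoeff_eq, logCoeff_eq,
      (by omega : j + 1 + t - (j+1) = t), (by omega : j + 1 + t + 1 - (j+1) = t + 1),
      (by omega : j + 1 + t - j = t + 1)]
    have := sRec j (j+1+t)
    rw [pow_succ]
    push_cast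
    push_cast at this
    linear_combination (-(-1:ℂ)^t) * this

@[simp] lemma cbinom_zero (β : ℂ) : cbinom β 0 = 1 := by simp [cbinom]

lemma cbinom_succ (β : ℂ) (l : ℕ) :
    ((l:ℂ)+1) * cbinom β (l+1) = (β - (l:ℂ)) * cbinom β l := by
  rw [cbinom, cbinom, Finset.prod_range_succ, Nat.factorial_succ]
  have h1 : (l.factorial : ℂ) ≠ 0 := Nat.cast_ne_zero.mpr l.factorial_ne_zero
  have h2 : ((l:ℂ)+1) ≠ 0 := by exact_mod_cast Nat.succ_ne_zero l
  field_simp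
  push_cast
  ring

lemma key (K j : ℕ) (hj : j ≤ K + 1) (β : ℂ) :
    ((K:ℂ)+1) * ∑ q ∈ Icc j (K+1), cbinom β (K+1-q) * logCoeff j q
      = (β - (K:ℂ)) * (∑ q ∈ Icc j K, cbinom β (K-q) * logCoeff j q)
        + (j:ℂ) * ∑ q ∈ Icc (j-1) K, cbinom β (K-q) * logCoeff (j-1) q := by
  rcases j with _ | t
  · -- j = 0 : only q = 0 contributes
    have h1 : ∑ q ∈ Icc 0 (K+1), cbinom β (K+1-q) * logCoeff 0 q = cbinom β (K+1) := by
      rw [Finset.sum_eq_single_of_mem 0 (by simp)]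
      · simp
      · intro q hq hne
        obtain ⟨r, rfl⟩ : ∃ r, q = r + 1 := ⟨q - 1, by omega⟩
        rw [logCoeff_zero_succ, mul_zero]
    have h2 : ∑ q ∈ Icc 0 K, cbinom β (K-q) * logCoeff 0 q = cbinom β K := by
      rw [Finset.sum_eq_single_of_mem 0 (by simp)]
      · simp
      · intro q hq hne
        obtain ⟨r, rfl⟩ : ∃ r, q = r + 1 := ⟨q - 1, by omega⟩
        rw [logCoeff_zero_succ, mul_zero]
    rw [h1, h2]
    push_cast
    rw [cbinom_succ β K]
    ring
  · have ht : t + 1 ≤ K + 1 := hj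
    have htK : t ≤ K := by omega
    set c : ℕ → ℂ := logCoeff (t+1) with hc
    set d : ℕ → ℂ := logCoeff t with hd
    -- splitting each term for q ≤ K
    have split : ∀ q ∈ Icc (t+1) K,
        ((K:ℂ)+1) * (cbinom β (K+1-q) * c q)
          = (β - (K:ℂ)) * (cbinom β (K-q) * c q)
            + (q:ℂ) * cbinom β (K-q) * c q
            + (q:ℂ) * cbinom β (K+1-q) * c q := by
      intro q hq
      rw [Finset.mem_Icc] at hq
      have hq2 : q ≤ K := hq.2
      have e1 : K + 1 - q = (K - q) + 1 := by omega
      have e2 : ((K:ℂ)+1) = (((K-q:ℕ):ℂ)+1) + (q:ℂ) := by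
        rw [Nat.cast_sub hq2]; ring
      have e3 : (β - ((K-q:ℕ):ℂ)) = (β - (K:ℂ)) + (q:ℂ) := by
        rw [Nat.cast_sub hq2]; ring
      rw [e1, e2]
      have := cbinom_succ β (K-q)
      rw [e3] at this
      linear_combination (c q) * this
    have F1 : ((K:ℂ)+1) * ∑ q ∈ Icc (t+1) (K+1), cbinom β (K+1-q) * c q
        = (β - (K:ℂ)) * (∑ q ∈ Icc (t+1) K, cbinom β (K-q) * c q)
          + (∑ q ∈ Icc (t+1) K, (q:ℂ) * cbinom β (K-q) * c q)
          + (∑ q ∈ Icc (t+1) (K+1), (q:ℂ) * cbinom β (K+1-q) * c q) := by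
      rw [Finset.sum_Icc_succ_top ht, Finset.sum_Icc_succ_top ht
        (f := fun q => (q:ℂ) * cbinom β (K+1-q) * c q)]
      rw [mul_add, Finset.mul_sum, Finset.sum_congr rfl split,
        Finset.sum_add_distrib, Finset.sum_add_distrib, Finset.mul_sum]
      have : K + 1 - (K + 1) = 0 := by omega
      rw [this]
      push_cast
      ring
    -- extend the middle sum down to t
    have F4 : ∑ q ∈ Icc (t+1) K, (q:ℂ) * cbinom β (K-q) * c q
        = ∑ q ∈ Icc t K, (q:ℂ) * cbinom β (K-q) * c q := by
      rw [Finset.Icc_eq_cons_Ioc htK, Finset.sum_cons, ← Finset.Icc_add_one_left_eq_Ioc]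
      rw [hc, logCoeff_zero_lt (Nat.lt_succ_self t), mul_zero, zero_add]
    -- reindex the last sum
    have F3 : ∑ q ∈ Icc (t+1) (K+1), (q:ℂ) * cbinom β (K+1-q) * c q
        = ∑ q ∈ Icc t K, ((q:ℂ)+1) * cbinom β (K-q) * c (q+1) := by
      have h := Finset.map_add_right_Icc t K 1
      rw [← h, Finset.sum_map]
      refine Finset.sum_congr rfl fun q hq => ?_
      simp only [addRightEmbedding_apply]
      have : K + 1 - (q + 1) = K - q := by omega
      rw [this]
      push_cast
      ring
    rw [F1, F4, F3, add_assoc, ← Finset.sum_add_distrib]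
    have F5 : ∑ q ∈ Icc t K, ((q:ℂ) * cbinom β (K-q) * c q + ((q:ℂ)+1) * cbinom β (K-q) * c (q+1))
        = ∑ q ∈ Icc t K, (((t:ℂ)+1) * (cbinom β (K-q) * d q)) := by
      refine Finset.sum_congr rfl fun q hq => ?_
      have := cRec t q
      rw [← hc, ← hd] at this
      linear_combination (cbinom β (K-q)) * this
    rw [F5, ← Finset.mul_sum]
    push_cast
    ring

noncomputable def Acoef (K j : ℕ) (N M : ℂ) : ℂ :=
  ∑ q ∈ Finset.Icc j K, cbinom (N + (K:ℂ)) (K - q) * cbinom (M + (j:ℂ)) j * logCoeff j q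

lemma Acoef_zero {K j : ℕ} (h : K < j) (N M : ℂ) : Acoef K j N M = 0 := by
  rw [Acoef, Finset.Icc_eq_empty (by omega), Finset.sum_empty]

lemma Acoef_factor (K j : ℕ) (N M : ℂ) :
    Acoef K j N M = cbinom (M + (j:ℂ)) j * ∑ q ∈ Icc j K, cbinom (N + (K:ℂ)) (K-q) * logCoeff j q := by
  rw [Acoef, Finset.mul_sum]
  exact Finset.sum_congr rfl fun q _ => by ring

lemma Astep (K j : ℕ) (hj : j ≤ K + 1) (N M : ℂ) :
    ((K:ℂ)+1) * Acoef (K+1) j N M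
      = (N+1) * Acoef K j (N+1) M
        + (if j = 0 then (0:ℂ) else (M+1) * Acoef K (j-1) (N+1) (M+1)) := by
  have hβ1 : N + ((K+1:ℕ):ℂ) = N + (K:ℂ) + 1 := by push_cast; ring
  have hβ2 : N + 1 + (K:ℂ) = N + (K:ℂ) + 1 := by ring
  rcases j with _ | t
  · rw [if_pos rfl, add_zero, Acoef_factor, Acoef_factor, hβ1, hβ2]
    simp only [Nat.cast_zero, add_zero, cbinom_zero, one_mul]
    have k := key K 0 (by omega) (N + (K:ℂ) + 1)
    simp only [Nat.cast_zero, zero_mul, add_zero, Nat.zero_sub] at k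
    linear_combination k
  · rw [if_neg (Nat.succ_ne_zero t)]
    rw [Acoef_factor, Acoef_factor, Acoef_factor, hβ1, hβ2]
    simp only [Nat.add_sub_cancel]
    have hγ1 : M + ((t+1:ℕ):ℂ) = M + (t:ℂ) + 1 := by push_cast; ring
    have hγ2 : M + 1 + (t:ℂ) = M + (t:ℂ) + 1 := by ring
    rw [hγ1, hγ2]
    have k := key K (t+1) hj (N + (K:ℂ) + 1)
    simp only [Nat.add_sub_cancel] at k
    push_cast at k
    have hy := cbinom_succ (M + (t:ℂ) + 1) t
    set Sl := ∑ q ∈ Icc t K, cbinom (N + (K:ℂ) + 1) (K-q) * logCoeff t q with hSl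
    set X := cbinom (M + (t:ℂ) + 1) (t+1) with hX
    linear_combination X * k + Sl * hy

lemma vecstep {W : Type*} [AddCommGroup W] [Module ℂ W] (v : ℕ → W) (K : ℕ) (N M : ℂ) :
    (N+1) • (∑ j ∈ range (K+1), Acoef K j (N+1) M • v j)
      + (M+1) • (∑ j ∈ range (K+1), Acoef K j (N+1) (M+1) • v (j+1))
    = ((K:ℂ)+1) • ∑ j ∈ range (K+2), Acoef (K+1) j N M • v j := by
  rw [Finset.smul_sum, Finset.smul_sum, Finset.smul_sum]
  have e1 : ∀ j ∈ range (K+1), (N+1) • (Acoef K j (N+1) M • v j)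
      = ((N+1) * Acoef K j (N+1) M) • v j := fun j _ => smul_smul _ _ _
  have e2 : ∀ j ∈ range (K+1), (M+1) • (Acoef K j (N+1) (M+1) • v (j+1))
      = ((M+1) * Acoef K j (N+1) (M+1)) • v (j+1) := fun j _ => smul_smul _ _ _
  have e3 : ∀ j ∈ range (K+2), ((K:ℂ)+1) • (Acoef (K+1) j N M • v j)
      = ((N+1) * Acoef K j (N+1) M) • v j
        + (if j = 0 then (0:ℂ) else (M+1) * Acoef K (j-1) (N+1) (M+1)) • v j := by
    intro j hj
    rw [Finset.mem_range] at hj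
    rw [smul_smul, Astep K j (by omega) N M, add_smul]
  rw [Finset.sum_congr rfl e1, Finset.sum_congr rfl e2, Finset.sum_congr rfl e3,
    Finset.sum_add_distrib]
  congr 1
  · conv_rhs => rw [Finset.sum_range_succ]
    rw [Acoef_zero (Nat.lt_succ_self K), mul_zero, zero_smul, add_zero]
  · conv_rhs => rw [Finset.sum_range_succ' (fun j => (if j = 0 then (0:ℂ) else (M+1) * Acoef K (j-1) (N+1) (M+1)) • v j) (K+1)]
    simp

theorem stmt3' {W : Type*} [AddCommGroup W] [Module ℂ W]
    (f : ℂ × ℂ → W) (K : ℕ) (N M : ℂ) :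
    (K.factorial : ℂ)⁻¹ • Dlog^[K] f (N, M)
      = ∑ j ∈ Finset.range (K + 1), Acoef K j N M • f (N + (K : ℂ), M + (j : ℂ)) := by
  induction K generalizing N M with
  | zero =>
    simp only [Function.iterate_zero, id_eq, Nat.factorial_zero, Nat.cast_one, inv_one, one_smul,
      zero_add, Finset.range_one, Finset.sum_singleton, Nat.cast_zero, add_zero]
    rw [Acoef]
    simp
  | succ K ih =>
    have hDf : Dlog^[K+1] f (N, M)
        = (N+1) • Dlog^[K] f (N+1, M) + (M+1) • Dlog^[K] f (N+1, M+1) := by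
      rw [Function.iterate_succ_apply']
      rfl
    have hK : (K.factorial:ℂ) ≠ 0 := Nat.cast_ne_zero.mpr K.factorial_ne_zero
    have hK1 : ((K:ℂ)+1) ≠ 0 := by exact_mod_cast Nat.succ_ne_zero K
    have h1 : Dlog^[K] f (N+1, M)
        = (K.factorial:ℂ) • ∑ j ∈ range (K+1), Acoef K j (N+1) M • f (N+1+(K:ℂ), M+(j:ℂ)) := by
      rw [← ih (N+1) M, smul_smul, mul_inv_cancel₀ hK, one_smul]
    have h2 : Dlog^[K] f (N+1, M+1)
        = (K.factorial:ℂ) • ∑ j ∈ range (K+1), Acoef K j (N+1) (M+1) • f (N+1+(K:ℂ), M+1+(j:ℂ)) := by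
      rw [← ih (N+1) (M+1), smul_smul, mul_inv_cancel₀ hK, one_smul]
    -- normalize the f-arguments
    have hN : N + 1 + (K:ℂ) = N + ((K+1:ℕ):ℂ) := by push_cast; ring
    have hMv : ∀ j : ℕ, M + 1 + (j:ℂ) = M + ((j+1:ℕ):ℂ) := by intro j; push_cast; ring
    have h2' : ∑ j ∈ range (K+1), Acoef K j (N+1) (M+1) • f (N+((K+1:ℕ):ℂ), M+1+(j:ℂ))
        = ∑ j ∈ range (K+1), Acoef K j (N+1) (M+1) • f (N+((K+1:ℕ):ℂ), M+((j+1:ℕ):ℂ)) := by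
      refine Finset.sum_congr rfl fun j _ => ?_
      rw [hMv j]
    have hvs := vecstep (fun i => f (N+((K+1:ℕ):ℂ), M+(i:ℂ))) K N M
    have hfac : (((K+1).factorial:ℕ):ℂ) = ((K:ℂ)+1) * (K.factorial:ℂ) := by
      rw [Nat.factorial_succ]
      push_cast
      ring
    have hKf : (((K+1).factorial:ℕ):ℂ) ≠ 0 := Nat.cast_ne_zero.mpr (K+1).factorial_ne_zero
    refine smul_right_injective W hKf ?_
    show (((K+1).factorial:ℕ):ℂ) • (((K+1).factorial:ℕ):ℂ)⁻¹ • Dlog^[K+1] f (N, M) = _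
    rw [smul_smul, mul_inv_cancel₀ hKf, one_smul]
    rw [hDf, h1, h2, hN, h2']
    rw [smul_comm (N+1) ((K.factorial:ℕ):ℂ), smul_comm (M+1) ((K.factorial:ℕ):ℂ), ← smul_add,
      hvs, smul_smul]
    congr 1
    rw [hfac]
    ring

/-- Taylor's theorem `e^{y d/dx} f = f(x+y)` for logarithmic formal series, coefficientwise:
the coefficient of `y^K x^N (log x)^M` on both sides agree. -/
theorem stmt3 {W : Type*} [AddCommGroup W] [Module ℂ W]
    (f : ℂ × ℂ → W) (K : ℕ) (N M : ℂ) :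
    (K.factorial : ℂ)⁻¹ • Dlog^[K] f (N, M)
      = ∑ j ∈ Finset.range (K + 1), ∑ q ∈ Finset.Icc j K,
          (cbinom (N + (K : ℂ)) (K - q) * cbinom (M + (j : ℂ)) j * logCoeff j q) •
            f (N + (K : ℂ), M + (j : ℂ)) := by
  rw [stmt3' f K N M]
  refine Finset.sum_congr rfl fun j _ => ?_
  rw [Acoef, Finset.sum_smul]
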